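/- arXiv:1911.00844 — 2 statements merged into one kernel-verified Lean document; each statement's English description precedes it below -/
import Mathlib

section
/- Consider the distributed recursion x^{ν+1}_{(i)} = Σ_{j=1}^n W_{ij} x^ν_{(j)} − γ^ν y^ν_{(i)} over n agents, where W ∈ ℝ^{n×n} has rows and columns each summing to 1 and is β-contractive on the mean-zero subspace, γ^ν ≥ 0, and each ‖y^ν_{(i)}‖ ≤ B. Then for every ν ≥ 0 the stacked consensus deviation satisfies ‖x^ν − x̄^ν‖ ≤ β^ν ‖x^0 − x̄^0‖ + √n · B · Σ_{k=0}^{ν−1} β^{ν−1−k} γ^k. -/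
open Finset Real

section ConsensusAux
variable {n m : ℕ}

variable {n m : ℕ}

lemma sum_apply_euclid (s : Finset (Fin n)) (f : Fin n → EuclideanSpace ℝ (Fin m)) (c : Fin m) :
    (∑ i ∈ s, f i) c = ∑ i ∈ s, f i c := by
  induction s using Finset.cons_induction with
  | empty => rfl
  | cons a s ha ih => rw [Finset.sum_cons, Finset.sum_cons, PiLp.add_apply, ih]

lemma norm_sq_euclid (v : EuclideanSpace ℝ (Fin m)) : ‖v‖ ^ 2 = ∑ c, (v c) ^ 2 := by
  rw [EuclideanSpace.norm_eq, Real.sq_sqrt (by positivity)]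
  simp [sq_abs]

lemma contr_lift (W : Matrix (Fin n) (Fin n) ℝ) (β : ℝ) (hβ0 : 0 ≤ β)
    (hcontr : ∀ v : Fin n → ℝ, (∑ i, v i) = 0 →
      Real.sqrt (∑ i, (W.mulVec v i) ^ 2) ≤ β * Real.sqrt (∑ i, (v i) ^ 2))
    (d : Fin n → EuclideanSpace ℝ (Fin m)) (hd : ∑ i, d i = 0) :
    Real.sqrt (∑ i, ‖∑ j, W i j • d j‖ ^ 2) ≤ β * Real.sqrt (∑ i, ‖d i‖ ^ 2) := by
  have key : (∑ i, ‖∑ j, W i j • d j‖ ^ 2) ≤ β ^ 2 * ∑ i, ‖d i‖ ^ 2 := by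
    calc ∑ i, ‖∑ j, W i j • d j‖ ^ 2
        = ∑ i, ∑ c, (W.mulVec (fun j => d j c) i) ^ 2 := by
          refine Finset.sum_congr rfl fun i _ => ?_
          rw [norm_sq_euclid]
          refine Finset.sum_congr rfl fun c _ => ?_
          rw [sum_apply_euclid]
          simp [Matrix.mulVec, dotProduct, PiLp.smul_apply, smul_eq_mul]
      _ = ∑ c, ∑ i, (W.mulVec (fun j => d j c) i) ^ 2 := Finset.sum_comm
      _ ≤ ∑ c, β ^ 2 * ∑ i, (d i c) ^ 2 := by
          refine Finset.sum_le_sum fun c _ => ?_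
          have h0 : ∑ i, d i c = 0 := by
            have := congrArg (fun v : EuclideanSpace ℝ (Fin m) => v c) hd
            simpa [sum_apply_euclid] using this
          have h := hcontr (fun j => d j c) h0
          nlinarith [Real.sq_sqrt (show (0:ℝ) ≤ ∑ i, (W.mulVec (fun j => d j c) i) ^ 2 by positivity),
            Real.sq_sqrt (show (0:ℝ) ≤ ∑ i, (d i c) ^ 2 by positivity),
            Real.sqrt_nonneg (∑ i, (d i c) ^ 2),
            Real.sqrt_nonneg (∑ i, (W.mulVec (fun j => d j c) i) ^ 2)]
      _ = β ^ 2 * ∑ i, ‖d i‖ ^ 2 := by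
          rw [← Finset.mul_sum, Finset.sum_comm]
          congr 1
          exact Finset.sum_congr rfl fun i _ => (norm_sq_euclid _).symm
  calc Real.sqrt (∑ i, ‖∑ j, W i j • d j‖ ^ 2)
      ≤ Real.sqrt (β ^ 2 * ∑ i, ‖d i‖ ^ 2) := Real.sqrt_le_sqrt key
    _ = β * Real.sqrt (∑ i, ‖d i‖ ^ 2) := by
        rw [Real.sqrt_mul (sq_nonneg β), Real.sqrt_sq hβ0]

lemma variance_bound (hn : 0 < n) (y : Fin n → EuclideanSpace ℝ (Fin m)) (B : ℝ)
    (hB : ∀ i, ‖y i‖ ≤ B) :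
    Real.sqrt (∑ i, ‖y i - (n : ℝ)⁻¹ • ∑ k, y k‖ ^ 2) ≤ Real.sqrt n * B := by
  have hB0 : 0 ≤ B := le_trans (norm_nonneg _) (hB ⟨0, hn⟩)
  set c : EuclideanSpace ℝ (Fin m) := (n : ℝ)⁻¹ • ∑ k, y k with hc
  have hn0 : (n : ℝ) ≠ 0 := Nat.cast_ne_zero.mpr hn.ne'
  have hsum : (∑ k, y k) = (n : ℝ) • c := by
    rw [hc, smul_smul, mul_inv_cancel₀ hn0, one_smul]
  have key : ∑ i, ‖y i - c‖ ^ 2 ≤ n * B ^ 2 := by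
    have expand : ∀ i : Fin n, ‖y i - c‖ ^ 2
        = ‖y i‖ ^ 2 - 2 * (inner ℝ (y i) c : ℝ) + ‖c‖ ^ 2 := fun i => norm_sub_sq_real _ _
    calc ∑ i, ‖y i - c‖ ^ 2
        = (∑ i, ‖y i‖ ^ 2) - 2 * (inner ℝ (∑ i, y i) c : ℝ) + n * ‖c‖ ^ 2 := by
          rw [sum_inner]
          simp only [expand]
          rw [Finset.sum_add_distrib, Finset.sum_sub_distrib, ← Finset.mul_sum]
          simp [Finset.card_univ, mul_comm]
      _ = (∑ i, ‖y i‖ ^ 2) - n * ‖c‖ ^ 2 := by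
          rw [hsum, real_inner_smul_left, real_inner_self_eq_norm_sq]; ring
      _ ≤ ∑ i, ‖y i‖ ^ 2 := by nlinarith [norm_nonneg c, (Nat.cast_nonneg n : (0:ℝ) ≤ n), sq_nonneg ‖c‖]
      _ ≤ ∑ i : Fin n, B ^ 2 := Finset.sum_le_sum fun i _ => by
          nlinarith [hB i, norm_nonneg (y i)]
      _ = n * B ^ 2 := by simp [Finset.card_univ, mul_comm]
  calc Real.sqrt (∑ i, ‖y i - c‖ ^ 2) ≤ Real.sqrt (n * B ^ 2) := Real.sqrt_le_sqrt key
    _ = Real.sqrt n * B := by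
        rw [Real.sqrt_mul (Nat.cast_nonneg n), Real.sqrt_sq hB0]

lemma stacked_norm_sub_le (u v : Fin n → EuclideanSpace ℝ (Fin m)) :
    Real.sqrt (∑ i, ‖u i - v i‖ ^ 2) ≤
      Real.sqrt (∑ i, ‖u i‖ ^ 2) + Real.sqrt (∑ i, ‖v i‖ ^ 2) := by
  have h := norm_sub_le ((WithLp.equiv 2 (∀ _ : Fin n, EuclideanSpace ℝ (Fin m))).symm u)
    ((WithLp.equiv 2 (∀ _ : Fin n, EuclideanSpace ℝ (Fin m))).symm v)
  simpa [PiLp.norm_eq_of_L2] using h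


lemma step_bound (hn : 0 < n) (W : Matrix (Fin n) (Fin n) ℝ) (β : ℝ) (hβ0 : 0 ≤ β)
    (hrow : ∀ i, ∑ j, W i j = 1) (hcol : ∀ j, ∑ i, W i j = 1)
    (hcontr : ∀ v : Fin n → ℝ, (∑ i, v i) = 0 →
      Real.sqrt (∑ i, (W.mulVec v i) ^ 2) ≤ β * Real.sqrt (∑ i, (v i) ^ 2))
    (g : ℝ) (hg : 0 ≤ g) (xv yv x' : Fin n → EuclideanSpace ℝ (Fin m))
    (B : ℝ) (hB : ∀ i, ‖yv i‖ ≤ B)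
    (hstep : ∀ i, x' i = (∑ j, W i j • xv j) - g • yv i) :
    Real.sqrt (∑ i, ‖x' i - (n : ℝ)⁻¹ • ∑ k, x' k‖ ^ 2) ≤
      β * Real.sqrt (∑ i, ‖xv i - (n : ℝ)⁻¹ • ∑ k, xv k‖ ^ 2) + Real.sqrt n * B * g := by
  have hn0 : (n : ℝ) ≠ 0 := Nat.cast_ne_zero.mpr hn.ne'
  set D : Fin n → EuclideanSpace ℝ (Fin m) := fun i => xv i - (n : ℝ)⁻¹ • ∑ k, xv k with hD
  have hDzero : ∑ i, D i = 0 := by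
    simp only [hD]
    rw [Finset.sum_sub_distrib, Finset.sum_const, Finset.card_univ, Fintype.card_fin,
      ← Nat.cast_smul_eq_nsmul ℝ, smul_smul, mul_inv_cancel₀ hn0, one_smul, sub_self]
  have hmean : (∑ k, x' k) = (∑ k, xv k) - g • ∑ k, yv k := by
    simp only [hstep]
    rw [Finset.sum_sub_distrib, ← Finset.smul_sum, Finset.sum_comm]
    congr 1
    refine Finset.sum_congr rfl fun j _ => ?_
    rw [← Finset.sum_smul, hcol j, one_smul]
  have hDrec : ∀ i, x' i - (n : ℝ)⁻¹ • ∑ k, x' k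
      = (∑ j, W i j • D j) - g • (yv i - (n : ℝ)⁻¹ • ∑ k, yv k) := by
    intro i
    have hkey : ∑ j, W i j • ((n : ℝ)⁻¹ • ∑ k, xv k) = (n : ℝ)⁻¹ • ∑ k, xv k := by
      rw [← Finset.sum_smul, hrow i, one_smul]
    have hkey2 : ∑ k, ∑ j, W k j • xv j = ∑ k, xv k := by
      rw [Finset.sum_comm]
      refine Finset.sum_congr rfl fun j _ => ?_
      rw [← Finset.sum_smul, hcol j, one_smul]
    simp only [hD, hstep, smul_sub, Finset.sum_sub_distrib, hkey, hkey2, ← Finset.smul_sum]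
    module
  have e0 : Real.sqrt (∑ i, ‖x' i - (n : ℝ)⁻¹ • ∑ k, x' k‖ ^ 2)
      = Real.sqrt (∑ i, ‖(∑ j, W i j • D j) - g • (yv i - (n : ℝ)⁻¹ • ∑ k, yv k)‖ ^ 2) := by
    congr 1
    exact Finset.sum_congr rfl fun i _ => by rw [hDrec i]
  rw [e0]
  have h1 := stacked_norm_sub_le (fun i => ∑ j, W i j • D j)
    (fun i => g • (yv i - (n : ℝ)⁻¹ • ∑ k, yv k))
  have h2 := contr_lift W β hβ0 hcontr D hDzero
  have e1 : (∑ i, ‖g • (yv i - (n : ℝ)⁻¹ • ∑ k, yv k)‖ ^ 2)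
      = g ^ 2 * ∑ i, ‖yv i - (n : ℝ)⁻¹ • ∑ k, yv k‖ ^ 2 := by
    rw [Finset.mul_sum]
    refine Finset.sum_congr rfl fun i _ => ?_
    rw [norm_smul, mul_pow, Real.norm_eq_abs, sq_abs]
  have h3 : Real.sqrt (∑ i, ‖g • (yv i - (n : ℝ)⁻¹ • ∑ k, yv k)‖ ^ 2)
      ≤ Real.sqrt n * B * g := by
    rw [e1, Real.sqrt_mul (sq_nonneg _), Real.sqrt_sq hg]
    have h4 := variance_bound hn yv B hB
    calc g * Real.sqrt (∑ i, ‖yv i - (n : ℝ)⁻¹ • ∑ k, yv k‖ ^ 2)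
        ≤ g * (Real.sqrt n * B) := mul_le_mul_of_nonneg_left h4 hg
      _ = Real.sqrt n * B * g := by ring
  calc Real.sqrt (∑ i, ‖(∑ j, W i j • D j) - g • (yv i - (n : ℝ)⁻¹ • ∑ k, yv k)‖ ^ 2)
      ≤ Real.sqrt (∑ i, ‖∑ j, W i j • D j‖ ^ 2)
        + Real.sqrt (∑ i, ‖g • (yv i - (n : ℝ)⁻¹ • ∑ k, yv k)‖ ^ 2) := h1
    _ ≤ β * Real.sqrt (∑ i, ‖D i‖ ^ 2) + Real.sqrt n * B * g := add_le_add h2 h3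

end ConsensusAux

/-- Consider the distributed recursion
`x^{ν+1}_{(i)} = ∑ⱼ W_{ij} x^ν_{(j)} − γ^ν y^ν_{(i)}` over `n` agents, where `W` has rows and
columns each summing to `1` and is `β`-contractive on the mean-zero subspace (with
`β = max(|λ₂|,|λₙ|) ≥ 0`), `γ^ν ≥ 0`, and each `‖y^ν_{(i)}‖ ≤ B`.  Then for every `ν ≥ 0`
the stacked consensus deviation satisfies
`‖x^ν − x̄^ν‖ ≤ β^ν ‖x^0 − x̄^0‖ + √n · B · ∑_{k=0}^{ν−1} β^{ν−1−k} γ^k`. -/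
theorem consensus_deviation_geometric_bound
    (n m : ℕ) (W : Matrix (Fin n) (Fin n) ℝ) (β : ℝ) (hβ0 : 0 ≤ β)
    (hrow : ∀ i, ∑ j, W i j = 1)
    (hcol : ∀ j, ∑ i, W i j = 1)
    (hcontr : ∀ v : Fin n → ℝ, (∑ i, v i) = 0 →
      Real.sqrt (∑ i, (W.mulVec v i) ^ 2) ≤ β * Real.sqrt (∑ i, (v i) ^ 2))
    (γ : ℕ → ℝ) (hγ : ∀ ν, 0 ≤ γ ν)
    (x y : ℕ → Fin n → EuclideanSpace ℝ (Fin m))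
    (B : ℝ) (hB : ∀ ν i, ‖y ν i‖ ≤ B)
    (hstep : ∀ ν i, x (ν + 1) i = (∑ j, W i j • x ν j) - γ ν • y ν i) :
    ∀ ν, Real.sqrt (∑ i, ‖x ν i - (n : ℝ)⁻¹ • ∑ k, x ν k‖ ^ 2) ≤
      β ^ ν * Real.sqrt (∑ i, ‖x 0 i - (n : ℝ)⁻¹ • ∑ k, x 0 k‖ ^ 2)
        + Real.sqrt n * B * ∑ k ∈ Finset.range ν, β ^ (ν - 1 - k) * γ k := by
    classical
  rcases Nat.eq_zero_or_pos n with hn | hn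
  · subst hn
    intro ν
    simp
  have hB0 : 0 ≤ B := le_trans (norm_nonneg _) (hB 0 ⟨0, hn⟩)
  intro ν
  induction ν with
  | zero => simp
  | succ ν ih =>
    have hsb := step_bound hn W β hβ0 hrow hcol hcontr (γ ν) (hγ ν)
      (x ν) (y ν) (x (ν + 1)) B (hB ν) (hstep ν)
    have hC : 0 ≤ Real.sqrt n * B := mul_nonneg (Real.sqrt_nonneg _) hB0
    have hsum : ∑ k ∈ Finset.range (ν + 1), β ^ (ν + 1 - 1 - k) * γ k
        = β * (∑ k ∈ Finset.range ν, β ^ (ν - 1 - k) * γ k) + γ ν := by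
      rw [Finset.sum_range_succ, Finset.mul_sum]
      congr 1
      · refine Finset.sum_congr rfl fun k hk => ?_
        rw [Finset.mem_range] at hk
        rw [← mul_assoc, ← pow_succ']
        congr 2
        omega
      · simp
    calc Real.sqrt (∑ i, ‖x (ν + 1) i - (n : ℝ)⁻¹ • ∑ k, x (ν + 1) k‖ ^ 2)
        ≤ β * Real.sqrt (∑ i, ‖x ν i - (n : ℝ)⁻¹ • ∑ k, x ν k‖ ^ 2)
          + Real.sqrt n * B * γ ν := hsb
      _ ≤ β * (β ^ ν * Real.sqrt (∑ i, ‖x 0 i - (n : ℝ)⁻¹ • ∑ k, x 0 k‖ ^ 2)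
            + Real.sqrt n * B * ∑ k ∈ Finset.range ν, β ^ (ν - 1 - k) * γ k)
          + Real.sqrt n * B * γ ν := by
          have := mul_le_mul_of_nonneg_left ih hβ0
          linarith
      _ = β ^ (ν + 1) * Real.sqrt (∑ i, ‖x 0 i - (n : ℝ)⁻¹ • ∑ k, x 0 k‖ ^ 2)
          + Real.sqrt n * B * ∑ k ∈ Finset.range (ν + 1), β ^ (ν + 1 - 1 - k) * γ k := by
          rw [hsum]
          ring
end

section
/- (Consensus of the distributed stochastic subgradient iterates.) Consider the distributed recursion x^{ν+1}_{(i)} = Σ_{j=1}^n W_{ij} x^ν_{(j)} − γ^ν y^ν_{(i)} over n agents, where W ∈ ℝ^{n×n} has rows and columns each summing to 1 and is β-contractive on the mean-zero subspace with β < 1, where the step sizes satisfy γ^ν ≥ 0 and γ^ν → 0, where every update direction satisfies ‖y^ν_{(i)}‖ ≤ B for a fixed constant B, and with identical initialization x^0_{(1)} = x^0_{(2)} = … = x^0_{(n)}. Then the iterates reach consensus: for every agent i, lim_{ν→∞} ‖x^ν_{(i)} − x̄^ν‖ = 0. -/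
open Filter Finset


lemma aux_rec (β : ℝ) (hβ0 : 0 ≤ β) (hβ1 : β < 1) (a b : ℕ → ℝ)
    (ha : ∀ ν, 0 ≤ a ν) (hab : ∀ ν, a (ν + 1) ≤ β * a ν + b ν)
    (hb : Tendsto b atTop (nhds 0)) : Tendsto a atTop (nhds 0) := by
  rw [Metric.tendsto_atTop] at hb ⊢
  intro ε hε
  have h1β : 0 < 1 - β := by linarith
  obtain ⟨N, hN⟩ := hb ((1 - β) * (ε / 2)) (by positivity)
  have key : ∀ k, a (N + k) ≤ β ^ k * a N + ε / 2 := by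
    intro k
    induction k with
    | zero => simpa using by linarith [ha N, hε]
    | succ k ih =>
      have hbk : b (N + k) ≤ (1 - β) * (ε / 2) := by
        have := hN (N + k) (Nat.le_add_right _ _)
        rw [Real.dist_eq, sub_zero] at this
        exact (abs_lt.1 this).2.le
      have h2 : β * a (N + k) ≤ β * (β ^ k * a N + ε / 2) :=
        mul_le_mul_of_nonneg_left ih hβ0
      calc a (N + (k + 1)) = a ((N + k) + 1) := rfl
        _ ≤ β * a (N + k) + b (N + k) := hab (N + k)
        _ ≤ β * (β ^ k * a N + ε / 2) + (1 - β) * (ε / 2) := by linarith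
        _ = β ^ (k + 1) * a N + ε / 2 := by ring
  have hpow : Tendsto (fun k => β ^ k * a N) atTop (nhds 0) := by
    simpa using (tendsto_pow_atTop_nhds_zero_of_lt_one hβ0 hβ1).mul_const (a N)
  obtain ⟨K, hK⟩ := (Metric.tendsto_atTop.1 hpow) (ε / 2) (by positivity)
  refine ⟨N + K, fun ν hν => ?_⟩
  have hνN : N ≤ ν := le_trans (Nat.le_add_right _ _) hν
  have h1 : a ν ≤ β ^ (ν - N) * a N + ε / 2 := by
    have := key (ν - N); rwa [Nat.add_sub_cancel' hνN] at this
  have h2 : β ^ (ν - N) * a N < ε / 2 := by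
    have := hK (ν - N) (by omega)
    rw [Real.dist_eq, sub_zero] at this
    exact (abs_lt.1 this).2
  rw [Real.dist_eq, sub_zero, abs_of_nonneg (ha ν)]
  linarith

lemma frob_contract (n m : ℕ) (W : Matrix (Fin n) (Fin n) ℝ) (β : ℝ) (hβ0 : 0 ≤ β)
    (hcontr : ∀ v : Fin n → ℝ, (∑ i, v i) = 0 →
      Real.sqrt (∑ i, (W.mulVec v i) ^ 2) ≤ β * Real.sqrt (∑ i, (v i) ^ 2))
    (u : Fin n → EuclideanSpace ℝ (Fin m)) (hu : (∑ i, u i) = 0) :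
    Real.sqrt (∑ i, ‖∑ j, W i j • u j‖ ^ 2) ≤ β * Real.sqrt (∑ i, ‖u i‖ ^ 2) := by
  have hu' : ∀ k : Fin m, (∑ i, u i k) = 0 := by
    intro k
    have h0 : (∑ i, u i) k = 0 := by rw [hu]; rfl
    rw [WithLp.ofLp_sum, Finset.sum_apply] at h0
    exact h0
  have hA : ∀ i : Fin n, ‖∑ j, W i j • u j‖ ^ 2 = ∑ k, (W.mulVec (fun j => u j k) i) ^ 2 := by
    intro i
    rw [EuclideanSpace.norm_eq, Real.sq_sqrt (by positivity)]
    refine Finset.sum_congr rfl fun k _ => ?_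
    rw [Real.norm_eq_abs, sq_abs]
    congr 1
    rw [WithLp.ofLp_sum, Finset.sum_apply]
    simp [Matrix.mulVec, dotProduct, PiLp.smul_apply, smul_eq_mul]
  have hBnorm : ∀ i, ‖u i‖ ^ 2 = ∑ k, (u i k) ^ 2 := by
    intro i; rw [EuclideanSpace.norm_eq, Real.sq_sqrt (by positivity)]
    simp [sq_abs]
  have main : ∑ i, ‖∑ j, W i j • u j‖ ^ 2 ≤ β ^ 2 * ∑ i, ‖u i‖ ^ 2 := by
    simp only [hA, hBnorm]
    calc ∑ i, ∑ k, (W.mulVec (fun j => u j k) i) ^ 2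
        = ∑ k, ∑ i, (W.mulVec (fun j => u j k) i) ^ 2 := Finset.sum_comm
      _ ≤ ∑ k, β ^ 2 * ∑ i, (u i k) ^ 2 := by
          refine Finset.sum_le_sum fun k _ => ?_
          have h := hcontr (fun j => u j k) (hu' k)
          have h1 : (0:ℝ) ≤ ∑ i, (W.mulVec (fun j => u j k) i) ^ 2 := by positivity
          have h2 : (0:ℝ) ≤ ∑ i, ((u i k)) ^ 2 := by positivity
          calc ∑ i, (W.mulVec (fun j => u j k) i) ^ 2
              = (Real.sqrt (∑ i, (W.mulVec (fun j => u j k) i) ^ 2)) ^ 2 :=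
                (Real.sq_sqrt h1).symm
            _ ≤ (β * Real.sqrt (∑ i, (u i k) ^ 2)) ^ 2 :=
                pow_le_pow_left₀ (Real.sqrt_nonneg _) h 2
            _ = β ^ 2 * ∑ i, (u i k) ^ 2 := by rw [mul_pow, Real.sq_sqrt h2]
      _ = β ^ 2 * ∑ i, ∑ k, (u i k) ^ 2 := by rw [← Finset.mul_sum, Finset.sum_comm]
  calc Real.sqrt (∑ i, ‖∑ j, W i j • u j‖ ^ 2)
      ≤ Real.sqrt (β ^ 2 * ∑ i, ‖u i‖ ^ 2) := Real.sqrt_le_sqrt main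
    _ = β * Real.sqrt (∑ i, ‖u i‖ ^ 2) := by
        rw [Real.sqrt_mul (by positivity), Real.sqrt_sq hβ0]


/-- (Consensus of the distributed stochastic subgradient iterates.)
Consider the distributed recursion `x^{ν+1}_{(i)} = ∑ⱼ W_{ij} x^ν_{(j)} − γ^ν y^ν_{(i)}`
over `n` agents, where `W` has rows and columns each summing to `1` and is `β`-contractive
on the mean-zero subspace with `β < 1`, the step sizes satisfy `γ^ν ≥ 0` and `γ^ν → 0`,
every update direction satisfies `‖y^ν_{(i)}‖ ≤ B`, and the initialization is identical
across agents.  Then the iterates reach consensus: for every agent `i`,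
`lim_{ν→∞} ‖x^ν_{(i)} − x̄^ν‖ = 0`. -/
theorem distributed_iterates_reach_consensus
    (n m : ℕ) (W : Matrix (Fin n) (Fin n) ℝ) (β : ℝ) (hβ1 : β < 1)
    (hrow : ∀ i, ∑ j, W i j = 1)
    (hcol : ∀ j, ∑ i, W i j = 1)
    (hcontr : ∀ v : Fin n → ℝ, (∑ i, v i) = 0 →
      Real.sqrt (∑ i, (W.mulVec v i) ^ 2) ≤ β * Real.sqrt (∑ i, (v i) ^ 2))
    (γ : ℕ → ℝ) (hγ : ∀ ν, 0 ≤ γ ν)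
    (hγ0 : Tendsto γ atTop (nhds 0))
    (x y : ℕ → Fin n → EuclideanSpace ℝ (Fin m))
    (B : ℝ) (hB : ∀ ν i, ‖y ν i‖ ≤ B)
    (hinit : ∀ i j, x 0 i = x 0 j)
    (hstep : ∀ ν i, x (ν + 1) i = (∑ j, W i j • x ν j) - γ ν • y ν i) :
    ∀ i, Tendsto (fun ν => ‖x ν i - (n : ℝ)⁻¹ • ∑ k, x ν k‖) atTop (nhds 0) := by
  rcases Nat.eq_zero_or_pos n with hn | hn
  · subst hn; exact fun i => i.elim0
  intro i
  have hn0 : (n : ℝ) ≠ 0 := Nat.cast_ne_zero.2 hn.ne'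
  have hβ'0 : (0:ℝ) ≤ max β 0 := le_max_right _ _
  have hβ'1 : max β 0 < 1 := max_lt hβ1 one_pos
  have hcontr' : ∀ v : Fin n → ℝ, (∑ i, v i) = 0 →
      Real.sqrt (∑ i, (W.mulVec v i) ^ 2) ≤ (max β 0) * Real.sqrt (∑ i, (v i) ^ 2) :=
    fun v hv => (hcontr v hv).trans
      (mul_le_mul_of_nonneg_right (le_max_left _ _) (Real.sqrt_nonneg _))
  have hB0 : 0 ≤ B := le_trans (norm_nonneg _) (hB 0 ⟨0, hn⟩)
  set d : ℕ → Fin n → EuclideanSpace ℝ (Fin m) :=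
    fun ν i => x ν i - (n : ℝ)⁻¹ • ∑ k, x ν k with hd
  set D : ℕ → ℝ := fun ν => Real.sqrt (∑ i, ‖d ν i‖ ^ 2) with hD
  -- mean evolution
  have hmean : ∀ ν, ∑ k, x (ν + 1) k = (∑ k, x ν k) - γ ν • ∑ k, y ν k := by
    intro ν
    simp only [hstep]
    rw [Finset.sum_sub_distrib]
    congr 1
    · rw [Finset.sum_comm]
      refine Finset.sum_congr rfl fun j _ => ?_
      rw [← Finset.sum_smul, hcol, one_smul]
    · rw [Finset.smul_sum]
  -- deviation evolution
  have hdstep : ∀ ν i, d (ν + 1) i =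
      (∑ j, W i j • d ν j) - γ ν • (y ν i - (n : ℝ)⁻¹ • ∑ k, y ν k) := by
    intro ν i
    have h1 : ∑ j, W i j • d ν j =
        (∑ j, W i j • x ν j) - (n : ℝ)⁻¹ • ∑ k, x ν k := by
      simp only [hd, smul_sub, Finset.sum_sub_distrib, ← Finset.sum_smul, hrow, one_smul]
    simp only [hd]
    rw [hstep, hmean, h1, smul_sub, smul_sub, smul_comm (γ ν) ((n : ℝ)⁻¹)]
    abel
  -- deviations are mean-zero
  have hdzero : ∀ ν, ∑ i, d ν i = 0 := by
    intro ν
    simp only [hd]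
    rw [Finset.sum_sub_distrib, Finset.sum_const, Finset.card_fin, sub_eq_zero,
      ← Nat.cast_smul_eq_nsmul ℝ, smul_smul, mul_inv_cancel₀ hn0, one_smul]
  -- key recursive inequality
  have hkey : ∀ ν, D (ν + 1) ≤ (max β 0) * D ν + γ ν * (2 * B * Real.sqrt n) := by
    intro ν
    set A : PiLp 2 (fun _ : Fin n => EuclideanSpace ℝ (Fin m)) :=
      WithLp.toLp 2 (fun i => ∑ j, W i j • d ν j) with hA
    set Y : PiLp 2 (fun _ : Fin n => EuclideanSpace ℝ (Fin m)) :=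
      WithLp.toLp 2 (fun i => y ν i - (n : ℝ)⁻¹ • ∑ k, y ν k) with hY
    have hD1 : D (ν + 1) = ‖A - γ ν • Y‖ := by
      rw [PiLp.norm_eq_of_L2]
      simp only [hD, PiLp.sub_apply, PiLp.smul_apply, hA, hY, PiLp.toLp_apply]
      refine congrArg Real.sqrt (Finset.sum_congr rfl fun j _ => ?_)
      rw [hdstep ν j]
    have hAn : ‖A‖ ≤ (max β 0) * D ν := by
      rw [PiLp.norm_eq_of_L2]
      simp only [hA, hD]
      exact frob_contract n m W (max β 0) hβ'0 hcontr' (d ν) (hdzero ν)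
    have hyi : ∀ j, ‖Y j‖ ≤ 2 * B := by
      intro j
      have h2 : ‖(n : ℝ)⁻¹ • ∑ k, y ν k‖ ≤ B := by
        rw [norm_smul, Real.norm_eq_abs, abs_of_nonneg (by positivity)]
        have h3 : ‖∑ k, y ν k‖ ≤ (n : ℝ) * B := by
          calc ‖∑ k, y ν k‖ ≤ ∑ k, ‖y ν k‖ := norm_sum_le _ _
            _ ≤ ∑ _k : Fin n, B := Finset.sum_le_sum fun k _ => hB ν k
            _ = (n : ℝ) * B := by simp [Finset.sum_const, Finset.card_fin, nsmul_eq_mul]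
        calc (n : ℝ)⁻¹ * ‖∑ k, y ν k‖ ≤ (n : ℝ)⁻¹ * ((n : ℝ) * B) := by
              gcongr
            _ = B := by field_simp
      calc ‖Y j‖ ≤ ‖y ν j‖ + ‖(n : ℝ)⁻¹ • ∑ k, y ν k‖ := norm_sub_le _ _
        _ ≤ B + B := add_le_add (hB ν j) h2
        _ = 2 * B := by ring
    have hYn : ‖Y‖ ≤ 2 * B * Real.sqrt n := by
      rw [PiLp.norm_eq_of_L2]
      have hsum : ∑ j, ‖Y j‖ ^ 2 ≤ (n : ℝ) * (2 * B) ^ 2 := by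
        calc ∑ j, ‖Y j‖ ^ 2 ≤ ∑ _j : Fin n, (2 * B) ^ 2 :=
              Finset.sum_le_sum fun j _ => pow_le_pow_left₀ (norm_nonneg _) (hyi j) 2
          _ = (n : ℝ) * (2 * B) ^ 2 := by simp [Finset.sum_const, Finset.card_fin, nsmul_eq_mul]
      calc Real.sqrt (∑ j, ‖Y j‖ ^ 2) ≤ Real.sqrt ((n : ℝ) * (2 * B) ^ 2) :=
            Real.sqrt_le_sqrt hsum
        _ = 2 * B * Real.sqrt n := by
            rw [Real.sqrt_mul (Nat.cast_nonneg n), Real.sqrt_sq (by positivity)]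
            ring
    calc D (ν + 1) = ‖A - γ ν • Y‖ := hD1
      _ ≤ ‖A‖ + ‖γ ν • Y‖ := norm_sub_le _ _
      _ = ‖A‖ + γ ν * ‖Y‖ := by
          rw [norm_smul, Real.norm_eq_abs, abs_of_nonneg (hγ ν)]
      _ ≤ (max β 0) * D ν + γ ν * (2 * B * Real.sqrt n) :=
          add_le_add hAn (mul_le_mul_of_nonneg_left hYn (hγ ν))
  have hbtend : Tendsto (fun ν => γ ν * (2 * B * Real.sqrt n)) atTop (nhds 0) := by
    simpa using hγ0.mul_const (2 * B * Real.sqrt n)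
  have hDtend : Tendsto D atTop (nhds 0) :=
    aux_rec (max β 0) hβ'0 hβ'1 D _ (fun ν => Real.sqrt_nonneg _) hkey hbtend
  refine squeeze_zero (fun ν => norm_nonneg _) (fun ν => ?_) hDtend
  have hsingle : ‖d ν i‖ ^ 2 ≤ ∑ j, ‖d ν j‖ ^ 2 :=
    Finset.single_le_sum (f := fun j => ‖d ν j‖ ^ 2) (fun j _ => by positivity) (Finset.mem_univ i)
  calc ‖x ν i - (n : ℝ)⁻¹ • ∑ k, x ν k‖ = Real.sqrt (‖d ν i‖ ^ 2) := by
        rw [Real.sqrt_sq (norm_nonneg _)]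
    _ ≤ D ν := Real.sqrt_le_sqrt hsingle
end
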